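/- Let i, j ∈ ℕ with j ≤ i and set (r, r′) = (−ρ−2i, −ρ′−2j), so (r, r′) ∈ L. Then the ℂ-vector space of diagonal families for (r, r′) has dimension 4. -/

import Mathlib

noncomputable section

def gZero (i j q : ℕ) : ℂ :=
  if q ≤ j then ∏ k ∈ Finset.range q, (((k:ℂ)-j)/((k:ℂ)-i)) else 0

def gOne (i j q : ℕ) : ℂ :=
  if i+1 ≤ q then ∏ k ∈ Finset.Ico (i+1) q, (((k:ℂ)-j)/((k:ℂ)-i)) else 0

lemma cast_sub_ne {q i : ℕ} (h : q ≠ i) : ((q:ℂ) - i) ≠ 0 :=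
  sub_ne_zero.mpr (by exact_mod_cast h)

lemma gZero_rec (i j : ℕ) (hji : j ≤ i) (q : ℕ) :
    ((q:ℂ) - j) * gZero i j q = ((q:ℂ) - i) * gZero i j (q+1) := by
  unfold gZero
  rcases lt_trichotomy q j with h | h | h
  · rw [if_pos h.le, if_pos (show q+1 ≤ j by omega), Finset.prod_range_succ]
    have hqi : ((q:ℂ) - i) ≠ 0 := cast_sub_ne (show q ≠ i by omega)
    set P := ∏ k ∈ Finset.range q, (((k:ℂ)-j)/((k:ℂ)-i)) with hP
    field_simp
  · subst h
    rw [if_neg (show ¬ (q+1 ≤ q) by omega)]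
    simp
  · rw [if_neg (show ¬ (q ≤ j) by omega), if_neg (show ¬ (q+1 ≤ j) by omega)]
    simp

lemma gOne_rec (i j : ℕ) (hji : j ≤ i) (q : ℕ) :
    ((q:ℂ) - j) * gOne i j q = ((q:ℂ) - i) * gOne i j (q+1) := by
  unfold gOne
  rcases lt_trichotomy q i with h | h | h
  · rw [if_neg (by omega), if_neg (by omega)]
    simp
  · subst h
    rw [if_neg (by omega)]
    simp
  · rw [if_pos (by omega), if_pos (by omega),
      Finset.prod_Ico_succ_top (show i+1 ≤ q by omega)]
    have hqi : ((q:ℂ) - i) ≠ 0 := cast_sub_ne (show q ≠ i by omega)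
    set P := ∏ k ∈ Finset.Ico (i+1) q, (((k:ℂ)-j)/((k:ℂ)-i)) with hP
    field_simp

lemma gZero_zero (i j : ℕ) : gZero i j 0 = 1 := by simp [gZero]

lemma gZero_succ_i (i j : ℕ) (hji : j ≤ i) : gZero i j (i+1) = 0 := by
  rw [gZero, if_neg (by omega)]

lemma gOne_zero (i j : ℕ) : gOne i j 0 = 0 := by
  rw [gOne, if_neg (by omega)]

lemma gOne_succ_i (i j : ℕ) : gOne i j (i+1) = 1 := by simp [gOne]

lemma one_var_zero (i j : ℕ) (f : ℕ → ℂ)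
    (hrec : ∀ q : ℕ, ((q:ℂ) - j) * f q = ((q:ℂ) - i) * f (q+1))
    (h0 : f 0 = 0) (h1 : f (i+1) = 0) : ∀ q, f q = 0 := by
  have low : ∀ q, q ≤ i → f q = 0 := by
    intro q
    induction q with
    | zero => intro _; exact h0
    | succ m ih =>
      intro hm
      have h2 : ((m:ℂ) - i) ≠ 0 := cast_sub_ne (show m ≠ i by omega)
      have := hrec m
      rw [ih (by omega), mul_zero] at this
      rcases mul_eq_zero.mp this.symm with h | h
      · exact absurd h h2
      · exact h
  have high : ∀ q, f (i+1+q) = 0 := by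
    intro q
    induction q with
    | zero => exact h1
    | succ m ih =>
      have := hrec (i+1+m)
      rw [ih] at this
      push_cast at this
      have h2 : ((i:ℂ)+1+(m:ℂ) - i) ≠ 0 := by
        intro h
        apply cast_sub_ne (q := i+1+m) (i := i) (by omega)
        push_cast
        linear_combination h
      have h4 : ((i:ℂ)+1+(m:ℂ) - i) * f (i+1+m+1) = 0 := by linear_combination -this
      rcases mul_eq_zero.mp h4 with h | h
      · exact absurd h h2
      · exact h
  intro q
  rcases le_or_gt q i with h | h
  · exact low q h
  · have hq : q = i+1+(q-i-1) := by omega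
    rw [hq]; exact high _


/-- A diagonal family for `(r, r')` (case of unitary groups, ρ = n, ρ' = n−1):
(D1): `(r'+2q₁+n−1)·s(q₁,q₂) = (r+2q₁+n)·s(q₁+1,q₂)` and
(D2): `(r'+2q₂+n−1)·s(q₁,q₂) = (r+2q₂+n)·s(q₁,q₂+1)` for all `q₁, q₂ ∈ ℕ`. -/
def IsDiagFam (n : ℕ) (r r' : ℂ) (s : ℕ → ℕ → ℂ) : Prop :=
  ∀ q₁ q₂ : ℕ,
    (r' + 2*(q₁ : ℂ) + (n : ℂ) - 1) * s q₁ q₂ = (r + 2*(q₁ : ℂ) + (n : ℂ)) * s (q₁ + 1) q₂ ∧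
    (r' + 2*(q₂ : ℂ) + (n : ℂ) - 1) * s q₁ q₂ = (r + 2*(q₂ : ℂ) + (n : ℂ)) * s q₁ (q₂ + 1)

/-- The ℂ-vector space of diagonal families for `(r, r')`. -/
def diagFamSub (n : ℕ) (r r' : ℂ) : Submodule ℂ (ℕ → ℕ → ℂ) where
  carrier := {s | IsDiagFam n r r' s}
  add_mem' := by
    intro a b ha hb q₁ q₂
    constructor
    · simp only [Pi.add_apply]
      linear_combination (ha q₁ q₂).1 + (hb q₁ q₂).1
    · simp only [Pi.add_apply]
      linear_combination (ha q₁ q₂).2 + (hb q₁ q₂).2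
  zero_mem' := by
    intro q₁ q₂
    constructor <;> simp
  smul_mem' := by
    intro c s hs q₁ q₂
    constructor
    · simp only [Pi.smul_apply, smul_eq_mul]
      linear_combination c * (hs q₁ q₂).1
    · simp only [Pi.smul_apply, smul_eq_mul]
      linear_combination c * (hs q₁ q₂).2

/-- L = {(−ρ−2i, −ρ′−2j) : i, j ∈ ℕ, j ≤ i}, with ρ = n, ρ' = n−1. -/
def LC (n : ℕ) : Set (ℂ × ℂ) :=
  {p | ∃ i j : ℕ, j ≤ i ∧ p.1 = -(n : ℂ) - 2*(i : ℂ) ∧ p.2 = -((n : ℂ) - 1) - 2*(j : ℂ)}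


/-- evaluation at the four determining points -/
def evalFour (i : ℕ) : (ℕ → ℕ → ℂ) →ₗ[ℂ] (Fin 4 → ℂ) where
  toFun s := ![s 0 0, s 0 (i+1), s (i+1) 0, s (i+1) (i+1)]
  map_add' a b := by funext k; fin_cases k <;> simp
  map_smul' c a := by funext k; fin_cases k <;> simp

theorem statement14 (n : ℕ) (hn : 2 ≤ n) (i j : ℕ) (hji : j ≤ i) (r r' : ℂ)
    (hr : r = -(n : ℂ) - 2*(i : ℂ)) (hr' : r' = -((n : ℂ) - 1) - 2*(j : ℂ)) :
    Module.finrank ℂ (diagFamSub n r r') = 4 := by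
  subst hr hr'
  set r : ℂ := -(n : ℂ) - 2*(i : ℂ) with hr
  set r' : ℂ := -((n : ℂ) - 1) - 2*(j : ℂ) with hr'
  set E := (evalFour i).comp (diagFamSub n r r').subtype with hE
  have hinj : Function.Injective E := by
    rw [injective_iff_map_eq_zero]
    intro s hs
    have hmem : IsDiagFam n r r' (s : ℕ → ℕ → ℂ) := s.2
    simp only [hE, evalFour, LinearMap.comp_apply, Submodule.coe_subtype,
      LinearMap.coe_mk, AddHom.coe_mk] at hs
    have h00 : (s : ℕ → ℕ → ℂ) 0 0 = 0 := congrFun hs 0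
    have h01 : (s : ℕ → ℕ → ℂ) 0 (i+1) = 0 := congrFun hs 1
    have h10 : (s : ℕ → ℕ → ℂ) (i+1) 0 = 0 := congrFun hs 2
    have h11 : (s : ℕ → ℕ → ℂ) (i+1) (i+1) = 0 := congrFun hs 3
    have rec1 : ∀ q₂ q₁ : ℕ, ((q₁:ℂ) - j) * (s : ℕ → ℕ → ℂ) q₁ q₂
        = ((q₁:ℂ) - i) * (s : ℕ → ℕ → ℂ) (q₁+1) q₂ := by
      intro q₂ q₁
      have h := (hmem q₁ q₂).1
      simp only [hr, hr'] at h
      linear_combination h / 2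
    have rec2 : ∀ q₁ q₂ : ℕ, ((q₂:ℂ) - j) * (s : ℕ → ℕ → ℂ) q₁ q₂
        = ((q₂:ℂ) - i) * (s : ℕ → ℕ → ℂ) q₁ (q₂+1) := by
      intro q₁ q₂
      have h := (hmem q₁ q₂).2
      simp only [hr, hr'] at h
      linear_combination h / 2
    have col0 : ∀ q₁, (s : ℕ → ℕ → ℂ) q₁ 0 = 0 :=
      one_var_zero i j (fun q₁ => (s : ℕ → ℕ → ℂ) q₁ 0) (rec1 0) h00 h10
    have col1 : ∀ q₁, (s : ℕ → ℕ → ℂ) q₁ (i+1) = 0 :=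
      one_var_zero i j (fun q₁ => (s : ℕ → ℕ → ℂ) q₁ (i+1)) (rec1 (i+1)) h01 h11
    have hall : ∀ q₁ q₂, (s : ℕ → ℕ → ℂ) q₁ q₂ = 0 := fun q₁ =>
      one_var_zero i j (fun q₂ => (s : ℕ → ℕ → ℂ) q₁ q₂) (rec2 q₁) (col0 q₁) (col1 q₁)
    ext q₁ q₂
    exact hall q₁ q₂
  have hsurj : Function.Surjective E := by
    intro v
    set s : ℕ → ℕ → ℂ := fun q₁ q₂ =>
      v 0 * gZero i j q₁ * gZero i j q₂ + v 1 * gZero i j q₁ * gOne i j q₂ +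
      v 2 * gOne i j q₁ * gZero i j q₂ + v 3 * gOne i j q₁ * gOne i j q₂ with hsdef
    have hmem : IsDiagFam n r r' s := by
      intro q₁ q₂
      constructor
      · simp only [hr, hr']
        simp only [hsdef]
        linear_combination (2*(v 0 * gZero i j q₂ + v 1 * gOne i j q₂)) * gZero_rec i j hji q₁
          + (2*(v 2 * gZero i j q₂ + v 3 * gOne i j q₂)) * gOne_rec i j hji q₁
      · simp only [hr, hr']
        simp only [hsdef]
        linear_combination (2*(v 0 * gZero i j q₁ + v 2 * gOne i j q₁)) * gZero_rec i j hji q₂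
          + (2*(v 1 * gZero i j q₁ + v 3 * gOne i j q₁)) * gOne_rec i j hji q₂
    refine ⟨⟨s, hmem⟩, ?_⟩
    funext k
    fin_cases k <;>
      simp [hE, evalFour, hsdef, gZero_zero, gOne_zero, gZero_succ_i i j hji, gOne_succ_i]
  have e := LinearEquiv.ofBijective E ⟨hinj, hsurj⟩
  rw [e.finrank_eq, Module.finrank_fin_fun ℂ]

end
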